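/- arXiv:1707.01318 — 3 statements merged into one kernel-verified Lean document; each statement's English description precedes it below -/
import Mathlib

section
/- Let G be a profinite group, H a closed normal subgroup of profinite order prime to p, and A a discrete p-primary torsion G-module. Then the canonical map A^H → A_H from H-invariants to H-coinvariants (invariants included into A then projected to coinvariants) is an isomorphism. -/
/-- Averaging over `H/(N ∩ H)`: given a normal subgroup `N` with `p ∤ [H : N ∩ H]`,
there is an additive endomorphism `e` of `A` which is the identity on `H`-fixed
points killed by `p^n`, kills the augmentation generators for `N`-fixed elements,
lands in `H`-fixed points, and agrees with the identity modulo the augmentation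
subgroup. -/
private lemma avg_exists
    (p : ℕ) (hp : p.Prime) {G : Type*} [Group G]
    (H : Subgroup G) [H.Normal]
    {A : Type*} [AddCommGroup A] [DistribMulAction G A]
    (N : Subgroup G) [hNnormal : N.Normal]
    (hm : ¬ p ∣ (N.subgroupOf H).index)
    (n : ℕ) :
    ∃ e : A →+ A,
      (∀ x : A, (∀ h ∈ H, h • x = x) → p ^ n • x = 0 → e x = x) ∧
      (∀ g ∈ H, ∀ x : A, (∀ g' ∈ N, g' • x = x) → e (g • x - x) = 0) ∧
      (∀ x : A, (∀ g' ∈ N, g' • x = x) → ∀ g ∈ H, g • e x = e x) ∧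
      (∀ x : A, p ^ n • x = 0 →
        e x - x ∈ AddSubgroup.closure {y : A | ∃ h ∈ H, ∃ a : A, y = h • a - a}) := by
  classical
  set K : Subgroup H := N.subgroupOf H with hKdef
  have hKnormal : K.Normal := Subgroup.normal_subgroupOf
  set m : ℕ := K.index with hmdef
  have hm0 : m ≠ 0 := fun h => hm (h ▸ dvd_zero p)
  have : K.FiniteIndex := ⟨hm0⟩
  have : Finite (H ⧸ K) := K.finite_quotient_of_finiteIndex
  have : Fintype (H ⧸ K) := Fintype.ofFinite _
  have hcard : Fintype.card (H ⧸ K) = m := by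
    rw [hmdef, Subgroup.index_eq_card, Nat.card_eq_fintype_card]
  -- Bezout
  have hcop : IsCoprime ((m : ℤ)) (((p ^ n : ℕ) : ℤ)) := by
    rw [Nat.isCoprime_iff_coprime]
    exact ((hp.coprime_iff_not_dvd.mpr hm).symm).pow_right n
  obtain ⟨u, v, huv⟩ := hcop
  -- the averaging map
  set e : A →+ A := AddMonoidHom.mk'
      (fun x => u • ∑ q : H ⧸ K, ((Quotient.out q : H) : G) • x)
      (by
        intro a b
        simp [smul_add, Finset.sum_add_distrib]) with hedef
  have he : ∀ x : A, e x = u • ∑ q : H ⧸ K, ((Quotient.out q : H) : G) • x :=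
    fun _ => rfl
  -- killed by p^n ⇒ (u*m) • x = x
  have hum : ∀ x : A, p ^ n • x = 0 → (u * (m : ℤ)) • x = x := by
    intro x hpx
    have h1 : ((p ^ n : ℕ) : ℤ) • x = 0 := by rw [natCast_zsmul]; exact hpx
    have h2 : (u * (m : ℤ)) = 1 - v * ((p ^ n : ℕ) : ℤ) := by linarith
    rw [h2, sub_smul, one_smul, mul_smul, h1, smul_zero, sub_zero]
  -- coset representative manipulation, right version
  have fact1 : ∀ (q : H ⧸ K) (h : H) (x : A), (∀ g' ∈ N, g' • x = x) →
      ((Quotient.out (q * (h : H ⧸ K)) : H) : G) • x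
        = (((Quotient.out q : H) * h : H) : G) • x := by
    intro q h x hx
    have hk : (Quotient.out (q * (h : H ⧸ K)))⁻¹ * (Quotient.out q * h) ∈ K := by
      have h1 : (QuotientGroup.mk (Quotient.out (q * (h : H ⧸ K))) : H ⧸ K)
          = q * (h : H ⧸ K) := QuotientGroup.out_eq' _
      have h2 : (QuotientGroup.mk (Quotient.out q * h) : H ⧸ K)
          = q * (h : H ⧸ K) := by
        rw [QuotientGroup.mk_mul, QuotientGroup.out_eq']
      exact QuotientGroup.eq.mp (h1.trans h2.symm)
    set k : H := (Quotient.out (q * (h : H ⧸ K)))⁻¹ * (Quotient.out q * h) with hkdef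
    have hrepr : Quotient.out q * h = Quotient.out (q * (h : H ⧸ K)) * k := by
      rw [hkdef]; group
    have hkN : ((k : H) : G) ∈ N := (Subgroup.mem_subgroupOf).mp hk
    rw [hrepr, Subgroup.coe_mul, mul_smul, hx _ hkN]
  -- coset representative manipulation, left version
  have fact2 : ∀ (q : H ⧸ K) (h : H) (x : A), (∀ g' ∈ N, g' • x = x) →
      ((Quotient.out ((h : H ⧸ K) * q) : H) : G) • x
        = ((h * (Quotient.out q : H) : H) : G) • x := by
    intro q h x hx
    have hk : (Quotient.out ((h : H ⧸ K) * q))⁻¹ * (h * Quotient.out q) ∈ K := by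
      have h1 : (QuotientGroup.mk (Quotient.out ((h : H ⧸ K) * q)) : H ⧸ K)
          = (h : H ⧸ K) * q := QuotientGroup.out_eq' _
      have h2 : (QuotientGroup.mk (h * Quotient.out q) : H ⧸ K)
          = (h : H ⧸ K) * q := by
        rw [QuotientGroup.mk_mul, QuotientGroup.out_eq']
      exact QuotientGroup.eq.mp (h1.trans h2.symm)
    set k : H := (Quotient.out ((h : H ⧸ K) * q))⁻¹ * (h * Quotient.out q) with hkdef
    have hrepr : h * Quotient.out q = Quotient.out ((h : H ⧸ K) * q) * k := by
      rw [hkdef]; group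
    have hkN : ((k : H) : G) ∈ N := (Subgroup.mem_subgroupOf).mp hk
    rw [hrepr, Subgroup.coe_mul, mul_smul, hx _ hkN]
  refine ⟨e, ?_, ?_, ?_, ?_⟩
  · -- identity on H-fixed points killed by p^n
    intro x hx hpx
    have hsum : ∑ q : H ⧸ K, ((Quotient.out q : H) : G) • x = m • x := by
      have hterm : ∀ q : H ⧸ K, ((Quotient.out q : H) : G) • x = x := fun q =>
        hx _ (SetLike.coe_mem (Quotient.out q : H))
      rw [Finset.sum_congr rfl fun q _ => hterm q, Finset.sum_const,
        Finset.card_univ, hcard]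
    rw [he, hsum, ← natCast_zsmul, ← mul_smul]
    exact hum x hpx
  · -- kills augmentation generators
    intro g hg x hx
    set h : H := ⟨g, hg⟩ with hhdef
    have key : ∑ q : H ⧸ K, ((Quotient.out q : H) : G) • (g • x)
        = ∑ q : H ⧸ K, ((Quotient.out q : H) : G) • x := by
      have h1 : ∀ q : H ⧸ K, ((Quotient.out q : H) : G) • (g • x)
          = ((Quotient.out (q * (h : H ⧸ K)) : H) : G) • x := by
        intro q
        rw [fact1 q h x hx, Subgroup.coe_mul, mul_smul]
      rw [Finset.sum_congr rfl fun q _ => h1 q]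
      exact Fintype.sum_bijective (fun q : H ⧸ K => q * (h : H ⧸ K))
        (Group.mulRight_bijective _) _ _ (fun q => rfl)
    rw [map_sub, he, he, key, sub_self]
  · -- lands in H-fixed points
    intro x hx g hg
    set h : H := ⟨g, hg⟩ with hhdef
    have hgz : ∀ y : A, g • (u • y) = u • (g • y) := by
      intro y
      simpa using map_zsmul (DistribMulAction.toAddMonoidHom A g) u y
    have hgsum : g • (∑ q : H ⧸ K, ((Quotient.out q : H) : G) • x)
        = ∑ q : H ⧸ K, g • (((Quotient.out q : H) : G) • x) :=
      Finset.smul_sum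
    rw [he, hgz, hgsum]
    congr 1
    have h1 : ∀ q : H ⧸ K, g • (((Quotient.out q : H) : G) • x)
        = ((Quotient.out ((h : H ⧸ K) * q) : H) : G) • x := by
      intro q
      rw [fact2 q h x hx, Subgroup.coe_mul, mul_smul]
    rw [Finset.sum_congr rfl fun q _ => h1 q]
    exact Fintype.sum_bijective (fun q : H ⧸ K => (h : H ⧸ K) * q)
      (Group.mulLeft_bijective _) _ _ (fun q => rfl)
  · -- identity modulo the augmentation subgroup
    intro x hpx
    have hsplit : ∑ q : H ⧸ K, ((Quotient.out q : H) : G) • x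
        = (∑ q : H ⧸ K, (((Quotient.out q : H) : G) • x - x)) + m • x := by
      rw [Finset.sum_sub_distrib, Finset.sum_const, Finset.card_univ, hcard]
      abel
    have hrw : e x - x = u • ∑ q : H ⧸ K, (((Quotient.out q : H) : G) • x - x) := by
      rw [he, hsplit, smul_add, ← natCast_zsmul, ← mul_smul, hum x hpx]
      abel
    rw [hrw]
    refine AddSubgroup.zsmul_mem _ (AddSubgroup.sum_mem _ fun q _ => ?_) u
    exact AddSubgroup.subset_closure
      ⟨((Quotient.out q : H) : G), SetLike.coe_mem _, x, rfl⟩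

/-- Let `G` be a profinite group, `H` a closed normal subgroup of profinite order prime to `p`
(every open normal subgroup of `G` cuts out a finite quotient of `H` of order prime to `p`),
and `A` a discrete `p`-primary torsion `G`-module (each stabilizer is open, every element is
killed by a power of `p`).  Then the canonical map `A^H → A_H` from `H`-invariants to
`H`-coinvariants is an isomorphism (i.e. a bijection). -/
theorem stmt_1
    (p : ℕ) (hp : p.Prime)
    (G : Type*) [Group G] [TopologicalSpace G] [IsTopologicalGroup G]
    [CompactSpace G] [TotallyDisconnectedSpace G]
    (H : Subgroup G) [H.Normal] (hHclosed : IsClosed (H : Set G))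
    (hHorder : ∀ N : Subgroup G, N.Normal → IsOpen (N : Set G) →
      ¬ p ∣ (N.subgroupOf H).index)
    (A : Type*) [AddCommGroup A] [DistribMulAction G A]
    (hdisc : ∀ a : A, IsOpen ((MulAction.stabilizer G a : Subgroup G) : Set G))
    (hprim : ∀ a : A, ∃ n : ℕ, p ^ n • a = 0) :
    Function.Bijective
      (fun a : {a : A // ∀ h ∈ H, h • a = a} =>
        (QuotientAddGroup.mk a.1 :
          A ⧸ AddSubgroup.closure {x : A | ∃ h ∈ H, ∃ a : A, x = h • a - a})) := by
  classical
  have kill_mono : ∀ (x : A) (n₁ n₂ : ℕ), n₁ ≤ n₂ → p ^ n₁ • x = 0 → p ^ n₂ • x = 0 := by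
    intro x n₁ n₂ hle hx
    have h1 : p ^ n₂ = p ^ (n₂ - n₁) * p ^ n₁ := by
      rw [← pow_add, Nat.sub_add_cancel hle]
    rw [h1, mul_smul, hx, smul_zero]
  -- common open normal subgroup fixing finitely many elements
  have hcommon : ∀ (l : List A), ∃ N : OpenNormalSubgroup G,
      ∀ x ∈ l, ∀ g ∈ N.toSubgroup, g • x = x := by
    intro l
    have hU : ∃ U : Subgroup G, IsOpen (U : Set G) ∧ ∀ x ∈ l, ∀ g ∈ U, g • x = x := by
      induction l with
      | nil => exact ⟨⊤, by simp, by simp⟩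
      | cons x t ih =>
        obtain ⟨U, hUo, hUt⟩ := ih
        refine ⟨MulAction.stabilizer G x ⊓ U, ?_, ?_⟩
        · rw [Subgroup.coe_inf]
          exact (hdisc x).inter hUo
        · intro y hy g hg
          rcases List.mem_cons.mp hy with rfl | hy
          · exact hg.1
          · exact hUt y hy g hg.2
    obtain ⟨U, hUopen, hUfix⟩ := hU
    obtain ⟨N, hNU⟩ := IsTopologicalGroup.exist_openNormalSubgroup_sub_clopen_nhds_of_one
      ⟨U.isClosed_of_isOpen hUopen, hUopen⟩ U.one_mem
    exact ⟨N, fun x hx g hg => hUfix x hx g (hNU hg)⟩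
  -- common exponent killing finitely many elements
  have hkill : ∀ (l : List A), ∃ n : ℕ, ∀ x ∈ l, p ^ n • x = 0 := by
    intro l
    induction l with
    | nil => exact ⟨0, by simp⟩
    | cons x t ih =>
      obtain ⟨n₁, hn₁⟩ := ih
      obtain ⟨n₂, hn₂⟩ := hprim x
      refine ⟨max n₁ n₂, ?_⟩
      intro y hy
      rcases List.mem_cons.mp hy with rfl | hy
      · exact kill_mono y n₂ _ (le_max_right _ _) hn₂
      · exact kill_mono y n₁ _ (le_max_left _ _) (hn₁ y hy)
  -- key lemma: an H-fixed element of the augmentation subgroup is zero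
  have key : ∀ c : A,
      c ∈ AddSubgroup.closure {x : A | ∃ h ∈ H, ∃ a : A, x = h • a - a} →
      (∀ h ∈ H, h • c = c) → c = 0 := by
    intro c hcD hcH
    -- decompose c
    have hdec : ∃ l : List (G × A), (∀ z ∈ l, z.1 ∈ H) ∧
        (l.map fun z => z.1 • z.2 - z.2).sum = c := by
      refine AddSubgroup.closure_induction
        (p := fun x _ => ∃ l : List (G × A), (∀ z ∈ l, z.1 ∈ H) ∧
          (l.map fun z => z.1 • z.2 - z.2).sum = x) ?_ ?_ ?_ ?_ hcD
      · rintro x ⟨h, hh, a, rfl⟩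
        exact ⟨[(h, a)], by simp [hh], by simp⟩
      · exact ⟨[], by simp, by simp⟩
      · rintro x y - - ⟨l₁, hl₁, rfl⟩ ⟨l₂, hl₂, rfl⟩
        refine ⟨l₁ ++ l₂, ?_, by simp⟩
        intro z hz
        rcases List.mem_append.mp hz with h | h
        exacts [hl₁ z h, hl₂ z h]
      · rintro x - ⟨l, hl, rfl⟩
        refine ⟨l.map fun z => (z.1⁻¹, z.1 • z.2), ?_, ?_⟩
        · intro z hz
          obtain ⟨w, hw, rfl⟩ := List.mem_map.mp hz
          exact inv_mem (hl w hw)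
        · rw [List.map_map]
          have hcomp : ((fun z : G × A => z.1 • z.2 - z.2) ∘
              fun z : G × A => (z.1⁻¹, z.1 • z.2))
              = fun z : G × A => -(z.1 • z.2 - z.2) := by
            funext z
            simp [inv_smul_smul, neg_sub]
          rw [hcomp]
          induction l with
          | nil => simp
          | cons w t iht =>
            simp only [List.map_cons, List.sum_cons] at *
            rw [iht (fun z hz => hl z (List.mem_cons_of_mem w hz))]
            abel
    obtain ⟨l, hlH, hlsum⟩ := hdec
    obtain ⟨N, hNfix⟩ := hcommon (c :: l.map Prod.snd)
    obtain ⟨n, hn⟩ := hkill (c :: l.map Prod.snd)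
    obtain ⟨e, he1, he2, he3, he4⟩ := avg_exists p hp (A := A) H N.toSubgroup
      (hHorder N.toSubgroup inferInstance N.toOpenSubgroup.isOpen) n
    have hec : e c = c := he1 c hcH (hn c (List.mem_cons_self (a := c) (l := _)))
    have hec0 : e c = 0 := by
      rw [← hlsum, map_list_sum, List.map_map]
      refine List.sum_eq_zero ?_
      intro y hy
      obtain ⟨z, hz, rfl⟩ := List.mem_map.mp hy
      refine he2 z.1 (hlH z hz) z.2 (fun g' hg' => hNfix z.2 ?_ g' hg')
      exact List.mem_cons_of_mem c (List.mem_map_of_mem (f := Prod.snd) hz)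
    rw [← hec, hec0]
  constructor
  · -- injective
    rintro ⟨a, ha⟩ ⟨b, hb⟩ hab
    have hab' : (QuotientAddGroup.mk a :
        A ⧸ AddSubgroup.closure {x : A | ∃ h ∈ H, ∃ a : A, x = h • a - a})
        = QuotientAddGroup.mk b := hab
    have hc : -a + b ∈
        AddSubgroup.closure {x : A | ∃ h ∈ H, ∃ a : A, x = h • a - a} :=
      QuotientAddGroup.eq.mp hab'
    have hcH : ∀ h ∈ H, h • (-a + b) = -a + b := by
      intro h hh
      rw [smul_add, smul_neg, ha h hh, hb h hh]
    have : -a + b = 0 := key _ hc hcH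
    exact Subtype.ext (neg_add_eq_zero.mp this)
  · -- surjective
    intro q
    obtain ⟨a, rfl⟩ := QuotientAddGroup.mk_surjective q
    obtain ⟨n, hn⟩ := hprim a
    obtain ⟨N, hNfix⟩ := hcommon [a]
    obtain ⟨e, he1, he2, he3, he4⟩ := avg_exists p hp (A := A) H N.toSubgroup
      (hHorder N.toSubgroup inferInstance N.toOpenSubgroup.isOpen) n
    have hafix : ∀ g' ∈ N.toSubgroup, g' • a = a :=
      fun g' hg' => hNfix a (List.mem_singleton_self a) g' hg'
    refine ⟨⟨e a, fun h hh => he3 a hafix h hh⟩, ?_⟩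
    show (QuotientAddGroup.mk (e a) :
        A ⧸ AddSubgroup.closure {x : A | ∃ h ∈ H, ∃ a : A, x = h • a - a})
        = QuotientAddGroup.mk a
    refine QuotientAddGroup.eq.mpr ?_
    have hmem := (AddSubgroup.closure
      {x : A | ∃ h ∈ H, ∃ a : A, x = h • a - a}).neg_mem (he4 a hn)
    rwa [neg_sub, sub_eq_neg_add] at hmem
end

section
/- Let O be a complete DVR with uniformizer ϖ and fraction field K, and let A ≅ (K/O)^n be a cofree O-module with ϖ-torsion A[ϖ]. For any profinite group G acting continuously on A, if H^0(G, A[ϖ]) = 0 then H^0(G, A) = 0, and consequently the map H^1(G, A[ϖ]) → H^1(G, A)[ϖ] induced by the inclusion A[ϖ] ↪ A is an isomorphism. -/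
lemma aux_surjQ (O : Type*) [CommRing O] [IsDomain O] (ϖ : O) (hϖ : ϖ ≠ 0)
    (x : FractionRing O ⧸ LinearMap.range (Algebra.linearMap O (FractionRing O))) :
    ∃ y, ϖ • y = x := by
  obtain ⟨k, rfl⟩ := Submodule.Quotient.mk_surjective _ x
  refine ⟨Submodule.Quotient.mk ((algebraMap O (FractionRing O) ϖ)⁻¹ * k), ?_⟩
  rw [← Submodule.Quotient.mk_smul]
  congr 1
  rw [Algebra.smul_def, ← mul_assoc, mul_inv_cancel₀, one_mul]
  exact (map_ne_zero_iff _ (IsFractionRing.injective O _)).mpr hϖ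

lemma aux_torsQ (O : Type*) [CommRing O] [IsDomain O] [IsDiscreteValuationRing O]
    (ϖ : O) (hϖ : Irreducible ϖ)
    (x : FractionRing O ⧸ LinearMap.range (Algebra.linearMap O (FractionRing O))) :
    ∃ m : ℕ, ϖ ^ m • x = 0 := by
  obtain ⟨k, rfl⟩ := Submodule.Quotient.mk_surjective _ x
  obtain ⟨r, s, hs, rfl⟩ := IsFractionRing.div_surjective (A := O) k
  have hs0 : s ≠ 0 := nonZeroDivisors.ne_zero hs
  obtain ⟨m, u, rfl⟩ := IsDiscreteValuationRing.eq_unit_mul_pow_irreducible hs0 hϖ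
  refine ⟨m, ?_⟩
  rw [← Submodule.Quotient.mk_smul, Submodule.Quotient.mk_eq_zero]
  refine ⟨(↑u⁻¹ : O) * r, ?_⟩
  have hϖ0 : algebraMap O (FractionRing O) (ϖ ^ m) ≠ 0 :=
    (map_ne_zero_iff _ (IsFractionRing.injective O _)).mpr (pow_ne_zero m hϖ.ne_zero)
  have hu0 : algebraMap O (FractionRing O) (↑u : O) ≠ 0 :=
    (map_ne_zero_iff _ (IsFractionRing.injective O _)).mpr u.ne_zero
  have hden : algebraMap O (FractionRing O) (↑u * ϖ ^ m) ≠ 0 :=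
    (map_ne_zero_iff _ (IsFractionRing.injective O _)).mpr hs0
  simp only [Algebra.linearMap_apply, Algebra.smul_def]
  rw [mul_div_assoc', eq_div_iff hden, ← map_mul, ← map_mul]
  apply congrArg
  have : ((↑u⁻¹ : O) * r) * (↑u * ϖ ^ m) = ((↑u⁻¹ : O) * ↑u) * (r * ϖ ^ m) := by ring
  rw [this, Units.inv_mul, one_mul]
  ring



section Stmt4

variable (G : Type*) [Group G] [TopologicalSpace G]
variable (A : Type*) [AddCommGroup A] [TopologicalSpace A] [DistribMulAction G A]

/-- A continuous 1-cocycle on `G` with values in the discrete `G`-module `A`. -/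
def IsContOneCocycle4 (c : G → A) : Prop :=
  Continuous c ∧ ∀ g₁ g₂ : G, c (g₁ * g₂) = c g₁ + g₁ • c g₂

open scoped Pointwise

/-- Let `O` be a complete DVR with uniformizer `ϖ` and fraction field `K`, and let
`A ≅ (K/O)ⁿ` be a cofree `O`-module with `ϖ`-torsion `A[ϖ]`.  For any profinite group `G`
acting continuously on the discrete module `A` (by `O`-linear automorphisms), if
`H⁰(G, A[ϖ]) = 0` then `H⁰(G, A) = 0`, and consequently the map
`H¹(G, A[ϖ]) → H¹(G, A)[ϖ]` induced by the inclusion `A[ϖ] ↪ A` is an isomorphism: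
it is injective and surjective onto the `ϖ`-torsion classes. -/
theorem stmt_4
    (O : Type*) [CommRing O] [IsDomain O] [IsDiscreteValuationRing O]
    [IsAdicComplete (IsLocalRing.maximalIdeal O) O]
    (ϖ : O) (hϖ : Irreducible ϖ)
    [Module O A] [SMulCommClass G O A]
    (n : ℕ)
    (hcofree : Nonempty (A ≃ₗ[O]
      (Fin n → ((FractionRing O) ⧸ LinearMap.range (Algebra.linearMap O (FractionRing O))))))
    [IsTopologicalGroup G] [CompactSpace G] [TotallyDisconnectedSpace G]
    [DiscreteTopology A]
    (hdisc : ∀ a : A, IsOpen ((MulAction.stabilizer G a : Subgroup G) : Set G))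
    (hH0 : ∀ a : A, a ∈ Submodule.torsionBy O A ϖ → (∀ g : G, g • a = a) → a = 0) :
    (∀ a : A, (∀ g : G, g • a = a) → a = 0) ∧
    (∀ c : G → A, IsContOneCocycle4 G A c → (∀ g : G, c g ∈ Submodule.torsionBy O A ϖ) →
      (∃ a : A, ∀ g : G, c g = g • a - a) →
      ∃ b ∈ Submodule.torsionBy O A ϖ, ∀ g : G, c g = g • b - b) ∧
    (∀ c : G → A, IsContOneCocycle4 G A c →
      (∃ a : A, ∀ g : G, ϖ • c g = g • a - a) →
      ∃ c' : G → A, IsContOneCocycle4 G A c' ∧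
        (∀ g : G, c' g ∈ Submodule.torsionBy O A ϖ) ∧
        ∃ a : A, ∀ g : G, c g - c' g = g • a - a) := by

  classical
  obtain ⟨e⟩ := hcofree
  -- surjectivity of ϖ on A
  have hsurjA : ∀ a : A, ∃ b : A, ϖ • b = a := by
    intro a
    choose y hy using fun i => aux_surjQ O ϖ hϖ.ne_zero (e a i)
    refine ⟨e.symm y, ?_⟩
    have : e (ϖ • e.symm y) = e a := by
      rw [map_smul, e.apply_symm_apply]
      funext i
      exact hy i
    exact e.injective this
  -- torsion
  have htorsA : ∀ a : A, ∃ m : ℕ, ϖ ^ m • a = 0 := by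
    intro a
    choose m hm using fun i => aux_torsQ O ϖ hϖ (e a i)
    refine ⟨Finset.univ.sup m, ?_⟩
    apply e.injective
    rw [map_smul, map_zero]
    funext i
    have hle : m i ≤ Finset.univ.sup m := Finset.le_sup (Finset.mem_univ i)
    have : ϖ ^ Finset.univ.sup m • e a i
        = ϖ ^ (Finset.univ.sup m - m i) • ϖ ^ m i • e a i := by
      rw [← smul_assoc, smul_eq_mul, ← pow_add, Nat.sub_add_cancel hle]
    rw [Pi.smul_apply, this, hm i, smul_zero]
    rfl
  -- Part 1
  have part1 : ∀ a : A, (∀ g : G, g • a = a) → a = 0 := by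
    have key : ∀ (m : ℕ) (a : A), ϖ ^ m • a = 0 → (∀ g : G, g • a = a) → a = 0 := by
      intro m
      induction m with
      | zero => intro a h _; simpa using h
      | succ k ih =>
        intro a h hfix
        have h1 : ϖ ^ k • a = 0 := by
          refine hH0 _ ((Submodule.mem_torsionBy_iff _ _).mpr ?_) (fun g => ?_)
          · rw [smul_smul, ← pow_succ']
            exact h
          · rw [smul_comm g (ϖ ^ k) a, hfix g]
        exact ih a h1 hfix
    intro a hfix
    obtain ⟨m, hm⟩ := htorsA a
    exact key m a hm hfix
  refine ⟨part1, ?_, ?_⟩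
  · -- Part 2: injectivity
    rintro c hc hctors ⟨a, ha⟩
    have hfix : ∀ g : G, g • (ϖ • a) = ϖ • a := by
      intro g
      have h0 : ϖ • c g = 0 := (Submodule.mem_torsionBy_iff _ _).mp (hctors g)
      rw [ha g, smul_sub] at h0
      have h1 := sub_eq_zero.mp h0
      rw [smul_comm g ϖ a]
      exact h1
    refine ⟨a, (Submodule.mem_torsionBy_iff _ _).mpr (part1 _ hfix), ha⟩
  · -- Part 3: surjectivity
    rintro c hc ⟨a, ha⟩
    obtain ⟨a', ha'⟩ := hsurjA a
    -- continuity of orbit maps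
    have hcont : ∀ b : A, Continuous (fun g : G => g • b) := by
      intro b
      refine continuous_def.mpr fun s _ => ?_
      have hEq : (fun g : G => g • b) ⁻¹' s
          = ⋃ g₀ ∈ (fun g : G => g • b) ⁻¹' s,
              g₀ • ((MulAction.stabilizer G b : Subgroup G) : Set G) := by
        ext g
        simp only [Set.mem_iUnion, Set.mem_preimage, exists_prop]
        constructor
        · intro hg
          exact ⟨g, hg, ⟨1, Subgroup.one_mem _, by simp⟩⟩
        · rintro ⟨g₀, hg₀, y, hy, rfl⟩
          have hyb : y • b = b := hy
          show (g₀ * y) • b ∈ s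
          rw [mul_smul, hyb]
          exact hg₀
      rw [hEq]
      exact isOpen_biUnion fun g₀ _ => (hdisc b).smul g₀
    have hsub : ∀ f₁ f₂ : G → A, Continuous f₁ → Continuous f₂ →
        Continuous (fun g => f₁ g - f₂ g) := by
      intro f₁ f₂ h₁ h₂
      exact (continuous_of_discreteTopology
        (f := fun p : A × A => p.1 - p.2)).comp (h₁.prodMk h₂)
    refine ⟨fun g => c g - (g • a' - a'), ⟨?_, ?_⟩, ?_, a', ?_⟩
    · exact hsub _ _ hc.1 (hsub _ _ (hcont a') continuous_const)
    · intro g₁ g₂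
      show c (g₁ * g₂) - ((g₁ * g₂) • a' - a')
          = (c g₁ - (g₁ • a' - a')) + g₁ • (c g₂ - (g₂ • a' - a'))
      rw [hc.2 g₁ g₂, mul_smul, smul_sub, smul_sub]
      abel
    · intro g
      refine (Submodule.mem_torsionBy_iff _ _).mpr ?_
      show ϖ • (c g - (g • a' - a')) = 0
      rw [smul_sub, smul_sub, ha g, ← smul_comm g ϖ a', ha']
      abel
    · intro g
      show c g - (c g - (g • a' - a')) = g • a' - a'
      abel


end Stmt4
end

section
/- Let 0 → A → B → C → D be an exact sequence of finitely generated modules over a Noetherian local domain O (a DVR), where A is a torsion module and D is torsion-free. Then the induced sequence 0 → B̃ → C̃ → D is exact, where B̃ and C̃ denote the quotients of B and C by their torsion submodules. -/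
/-- Let `0 → A → B → C → D` be an exact sequence of finitely generated modules over a DVR
`O`, with `A` torsion and `D` torsion-free.  Then the induced sequence `0 → B̃ → C̃ → D` is
exact, where `B̃`, `C̃` are the quotients of `B`, `C` by their torsion submodules; stated
concretely:  the induced map `B̃ → C̃` is injective, its image is the kernel of the induced
map `C̃ → D`, and the latter map is well defined. -/
theorem stmt_15
    (O : Type*) [CommRing O] [IsDomain O] [IsDiscreteValuationRing O]
    (A B C D : Type*) [AddCommGroup A] [AddCommGroup B] [AddCommGroup C] [AddCommGroup D]
    [Module O A] [Module O B] [Module O C] [Module O D]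
    [Module.Finite O A] [Module.Finite O B] [Module.Finite O C] [Module.Finite O D]
    (f : A →ₗ[O] B) (g : B →ₗ[O] C) (h : C →ₗ[O] D)
    (hf : Function.Injective f)
    (hfg : LinearMap.range f = LinearMap.ker g)
    (hgh : LinearMap.range g = LinearMap.ker h)
    (hA : Module.IsTorsion O A)
    (hD : Submodule.torsion O D = ⊥) :
    -- the map `C̃ → D` is well defined on the torsion-free quotient
    (∀ c ∈ Submodule.torsion O C, h c = 0) ∧
    -- `B̃ → C̃` is injective
    (∀ b : B, g b ∈ Submodule.torsion O C → b ∈ Submodule.torsion O B) ∧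
    -- image of `B̃ → C̃` contains the kernel of `C̃ → D` ...
    (∀ c : C, h c = 0 → ∃ b : B, c - g b ∈ Submodule.torsion O C) ∧
    -- ... and is contained in it
    (∀ b : B, h (g b) = 0) := by

  refine ⟨?_, ?_, ?_, ?_⟩
  · intro c hc
    obtain ⟨r, hr⟩ := hc
    have : (r : O) • h c = 0 := by
      rw [← map_smul]
      rw [Submonoid.smul_def] at hr
      rw [hr, map_zero]
    have hm : h c ∈ Submodule.torsion O D := ⟨r, this⟩
    rw [hD] at hm
    exact hm
  · intro b hb
    obtain ⟨r, hr⟩ := hb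
    rw [Submonoid.smul_def, ← map_smul] at hr
    have : (r : O) • b ∈ LinearMap.range f := by rw [hfg]; exact hr
    obtain ⟨a, ha⟩ := this
    obtain ⟨s, hs⟩ := @hA a
    refine ⟨s * r, ?_⟩
    rw [Submonoid.smul_def, Submonoid.coe_mul]
    have : (s : O) • ((r : O) • b) = (s : O) • f a := by rw [ha]
    rw [Submonoid.smul_def] at hs
    rw [← map_smul, hs, map_zero] at this
    simpa [mul_smul] using this
  · intro c hc
    have : c ∈ LinearMap.range g := by rw [hgh]; exact hc
    obtain ⟨b, hb⟩ := this
    exact ⟨b, by simp [hb]⟩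
  · intro b
    have : g b ∈ LinearMap.ker h := hgh ▸ LinearMap.mem_range_self g b
    exact this
end
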